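/- Let X be a finite set, let p_0 and p_1 be probability mass functions on X, let λ > 0, and let A_LRT = {x ∈ X : p_1(x) > λ p_0(x)}. Then for every subset A ⊆ X: Σ_{x∈A_LRT} p_1(x) − Σ_{x∈A} p_1(x) ≥ λ · (Σ_{x∈A_LRT} p_0(x) − Σ_{x∈A} p_0(x)). -/

import Mathlib

/-- Quantitative Neyman–Pearson inequality: on a finite observation space `X` with
probability mass functions `p₀, p₁`, `λ > 0`, and `A_LRT = {x : p₁(x) > λ p₀(x)}`, for
every test `A ⊆ X` the gain in detection probability of the LRT over `A` is at least `λ`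
times the gain in false-alarm probability:
`P_D(A_LRT) − P_D(A) ≥ λ (P_FA(A_LRT) − P_FA(A))`. -/
theorem neyman_pearson_quantitative {X : Type*} [Fintype X] (p0 p1 : X → ℝ)
    (h0 : ∀ x, 0 ≤ p0 x) (h1 : ∀ x, 0 ≤ p1 x)
    (hs0 : ∑ x, p0 x = 1) (hs1 : ∑ x, p1 x = 1)
    (lam : ℝ) (hlam : 0 < lam)
    (A : Finset X) :
    lam * ((∑ x ∈ Finset.univ.filter fun x => lam * p0 x < p1 x, p0 x) - ∑ x ∈ A, p0 x)
      ≤ (∑ x ∈ Finset.univ.filter fun x => lam * p0 x < p1 x, p1 x) - ∑ x ∈ A, p1 x := by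
  classical
  set B := Finset.univ.filter fun x => lam * p0 x < p1 x with hB
  have key : ∑ x ∈ A, (p1 x - lam * p0 x) ≤ ∑ x ∈ B, (p1 x - lam * p0 x) := by
    have h1' : ∑ x ∈ A, (p1 x - lam * p0 x) ≤ ∑ x ∈ A ∩ B, (p1 x - lam * p0 x) := by
      rw [← Finset.sum_inter_add_sum_sdiff A B (fun x => p1 x - lam * p0 x)]
      have : ∑ x ∈ A \ B, (p1 x - lam * p0 x) ≤ 0 := by
        apply Finset.sum_nonpos
        intro x hx
        have := (Finset.mem_sdiff.mp hx).2
        simp [hB, Finset.mem_filter] at this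
        linarith
      linarith
    have h2' : ∑ x ∈ A ∩ B, (p1 x - lam * p0 x) ≤ ∑ x ∈ B, (p1 x - lam * p0 x) := by
      apply Finset.sum_le_sum_of_subset_of_nonneg (Finset.inter_subset_right)
      intro x hx _
      have := (Finset.mem_filter.mp hx).2
      linarith
    linarith
  rw [Finset.sum_sub_distrib, Finset.sum_sub_distrib, ← Finset.mul_sum, ← Finset.mul_sum] at key
  linarith
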